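/- arXiv:2308.03338 — 2 statements merged into one kernel-verified Lean document; each statement's English description precedes it below -/
import Mathlib

section
/- Let X be a simplicial complex with facets σ_1, …, σ_m, and let G be the complete weighted graph on [m] with vertex weights w(i) = |σ_i| and edge weights w({i,j}) = |σ_i ∩ σ_j|. For any facet ordering ≺, there exists a spanning tree F of G such that N_≺(X) = χ_w(F) − |V(X)| + 1, where N_≺(X) = m − |V(X)| + |σ_1| + Σ_{j=2}^m (dim σ_j − conn_≺ σ_j) and χ_w(F) = Σ_{v ∈ V(F)} w(v) − Σ_{e ∈ E(F)} w(e). -/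
open Finset

variable {V : Type*} [DecidableEq V] [Fintype V]

/-- An abstract simplicial complex: a finite collection of faces closed under subsets. -/
def IsComplex (X : Finset (Finset V)) : Prop :=
  ∀ s ∈ X, ∀ t, t ⊆ s → t ∈ X

/-- A collection of faces is a simplex if it is the full power set of some vertex set
(possibly empty). -/
def IsSimplexC (Y : Finset (Finset V)) : Prop := ∃ τ : Finset V, Y = τ.powerset

/-- The induced subcomplex `X[W]`. -/
def indOn (X : Finset (Finset V)) (W : Finset V) : Finset (Finset V) :=
  X.filter (fun s => s ⊆ W)

/-- The `ℤ/2ℤ` boundary of a chain, a chain being recorded as the finite set of faces with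
coefficient `1`.  The coefficient of `τ` in `∂ c` is the parity of the number of faces of `c`
covering `τ`.  (This includes the augmentation `∂₀`, with `∅` playing the role of the
generator of `C₋₁`, so homology is reduced homology.) -/
def bdry (c : Finset (Finset V)) : Finset (Finset V) :=
  Finset.univ.filter (fun τ => Odd (c.filter (fun s => τ ⊆ s ∧ s.card = τ.card + 1)).card)

/-- Sum of chains over `ℤ/2ℤ` (symmetric difference). -/
def chAdd (c d : Finset (Finset V)) : Finset (Finset V) := (c \ d) ∪ (d \ c)

/-- An `n`-dimensional chain of `X` (each face has `n+1` vertices). -/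
def IsNChain (X : Finset (Finset V)) (n : ℕ) (c : Finset (Finset V)) : Prop :=
  c ⊆ X ∧ ∀ s ∈ c, s.card = n + 1

/-- An `n`-cycle of `X` (reduced: `0`-cycles have evenly many vertices). -/
def IsNCycle (X : Finset (Finset V)) (n : ℕ) (c : Finset (Finset V)) : Prop :=
  IsNChain X n c ∧ bdry c = ∅

/-- An `n`-boundary of `X`. -/
def IsNBdry (X : Finset (Finset V)) (n : ℕ) (c : Finset (Finset V)) : Prop :=
  ∃ d, IsNChain X (n + 1) d ∧ bdry d = c

/-- `X` is `d`-Leray: all reduced homology of induced subcomplexes vanishes in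
dimensions `≥ d`. -/
def IsLeray (X : Finset (Finset V)) (d : ℕ) : Prop :=
  ∀ W : Finset V, ∀ i : ℕ, d ≤ i → ∀ c,
    IsNCycle (indOn X W) i c → IsNBdry (indOn X W) i c

/-- The Leray number `L(X)`. -/
noncomputable def lerayNum (X : Finset (Finset V)) : ℕ := sInf {d | IsLeray X d}

/-- The facets (maximal faces) of `X`. -/
def facetsOf (X : Finset (Finset V)) : Finset (Finset V) :=
  X.filter (fun s => ∀ t ∈ X, s ⊆ t → s = t)

/-- `σ 0, …, σ (m-1)` is an enumeration (linear ordering) of the facets of `X`. -/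
def IsFacetEnum (X : Finset (Finset V)) (m : ℕ) (σ : ℕ → Finset V) : Prop :=
  (∀ i, i < m → σ i ∈ facetsOf X) ∧ (∀ s ∈ facetsOf X, ∃ i, i < m ∧ σ i = s) ∧
    (∀ i j, i < m → j < m → σ i = σ j → i = j)

/-- `X_j = ⋃_{i < j} Δ(σ i)`. -/
def cUnion (σ : ℕ → Finset V) (j : ℕ) : Finset (Finset V) :=
  (Finset.range j).biUnion (fun i => (σ i).powerset)

-- `Mval σ j = M_≺(X_{j+1})`: starts at `1`, increases by `1` exactly when the newly
-- attached simplex meets the union of the previous ones in a non-simplex.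
open Classical in
noncomputable def Mval (σ : ℕ → Finset V) : ℕ → ℕ
  | 0 => 1
  | (j+1) => Mval σ j + (if IsSimplexC (cUnion σ (j+1) ∩ (σ (j+1)).powerset) then 0 else 1)

/-- `M(X)`: the minimum of `M_≺(X)` over all facet orderings. -/
noncomputable def Mnum (X : Finset (Finset V)) : ℕ :=
  sInf {k | ∃ m σ, 0 < m ∧ IsFacetEnum X m σ ∧ k = Mval σ (m - 1)}

/-- The facet ordering `σ 0 ≺ ⋯ ≺ σ (m-1)` is a weak shelling. -/
def IsWeakShelling (σ : ℕ → Finset V) (m : ℕ) : Prop :=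
  ∀ j, 1 ≤ j → j < m → ∃ u ∈ σ j, IsSimplexC (indOn (cUnion σ j) ((σ j).erase u))

/-- `c` is the edge set of a cycle (graph cycle, length `≥ 3`). -/
def IsCycleEdges (c : Finset (Finset V)) : Prop :=
  ∃ n : ℕ, 3 ≤ n ∧ ∃ f : ℕ → V, (∀ i j, i < n → j < n → f i = f j → i = j) ∧
    c = (Finset.range n).image (fun i => ({f i, f ((i + 1) % n)} : Finset V))

section Aux

open SimpleGraph

/-- A graph on `Fin n` whose adjacency is given by a strictly-decreasing parent map
is acyclic. -/
lemma isAcyclic_of_parent {n : ℕ} {G : SimpleGraph (Fin n)} {q : Fin n → Fin n}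
    (hadj : ∀ a b, G.Adj a b → (a = q b ∧ q b < b) ∨ (b = q a ∧ q a < a)) :
    G.IsAcyclic := by
  classical
  intro v c hc
  have hvs : v ∈ c.support := c.start_mem_support
  obtain ⟨u, hu, hmax⟩ : ∃ u ∈ c.support, ∀ y ∈ c.support, y ≤ u := by
    refine ⟨c.support.toFinset.max' ⟨v, List.mem_toFinset.mpr hvs⟩, ?_, ?_⟩
    · exact List.mem_toFinset.mp (Finset.max'_mem _ _)
    · intro y hy
      exact Finset.le_max' _ y (List.mem_toFinset.mpr hy)
  have hc' : (c.rotate u hu).IsCycle := hc.rotate hu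
  have htail : ∀ y, y ∈ (c.rotate u hu).support.tail → y ∈ c.support := by
    intro y hy
    have hperm := SimpleGraph.Walk.support_rotate c u hu
    exact List.mem_of_mem_tail (hperm.mem_iff.mp hy)
  have hnn : ¬ (c.rotate u hu).Nil := hc'.not_nil
  obtain ⟨x, h, p, hp⟩ := (SimpleGraph.Walk.not_nil_iff).mp hnn
  rw [hp] at hc' htail
  rw [SimpleGraph.Walk.cons_isCycle_iff] at hc'
  have hxu : x ≠ u := h.ne'
  have hxmem : x ∈ c.support := htail x (by simp [SimpleGraph.Walk.support_cons,
    p.start_mem_support])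
  have hxlt : x < u := lt_of_le_of_ne (hmax x hxmem) hxu
  have hxq : x = q u := by
    rcases hadj u x h with ⟨h1, h2⟩ | ⟨h1, h2⟩
    · exact absurd (h1 ▸ h2) (not_lt.mpr hxlt.le)
    · exact h1
  have hpnn : ¬ p.reverse.Nil := SimpleGraph.Walk.not_nil_of_ne (Ne.symm hxu)
  obtain ⟨y, h', p'', hrev⟩ := (SimpleGraph.Walk.not_nil_iff).mp hpnn
  have hymem : y ∈ c.support := by
    apply htail
    have : y ∈ p.support := by
      have : y ∈ p.reverse.support := by
        rw [hrev]
        simp [SimpleGraph.Walk.support_cons, p''.start_mem_support]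
      rwa [SimpleGraph.Walk.support_reverse, List.mem_reverse] at this
    simpa [SimpleGraph.Walk.support_cons] using this
  have hyu : y ≠ u := h'.ne'
  have hylt : y < u := lt_of_le_of_ne (hmax y hymem) hyu
  have hyq : y = q u := by
    rcases hadj u y h' with ⟨h1, h2⟩ | ⟨h1, h2⟩
    · exact absurd (h1 ▸ h2) (not_lt.mpr hylt.le)
    · exact h1
  have hyx : y = x := by rw [hyq, hxq]
  subst hyx
  -- now p.reverse = cons h' p'' with p'' : Walk y x = Walk x x a path, so nil
  have hpath : p.reverse.IsPath := hc'.1.reverse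
  rw [hrev, SimpleGraph.Walk.cons_isPath_iff] at hpath
  have hnil : p'' = SimpleGraph.Walk.nil := SimpleGraph.Walk.isPath_iff_eq_nil.mp hpath.1
  have hedge : s(u, y) ∈ p.edges := by
    have h1 : p.reverse.edges = [s(u, y)] := by rw [hrev, hnil]; simp
    have h2 : p.edges.reverse = [s(u, y)] := by
      rw [← SimpleGraph.Walk.edges_reverse]; exact h1
    have h3 : s(u, y) ∈ p.edges.reverse := by rw [h2]; simp
    simpa using h3
  exact hc'.2 hedge

end Aux

section Aux2

variable {V : Type*} [DecidableEq V] [Fintype V]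

/-- Index `< j` achieving the maximal intersection with `σ j`. -/
noncomputable def par (σ : ℕ → Finset V) (j : ℕ) : ℕ :=
  if h : 0 < j then
    (Finset.exists_mem_eq_sup (Finset.range j) (Finset.nonempty_range_iff.mpr h.ne')
      (fun i => (σ i ∩ σ j).card)).choose
  else 0

lemma par_lt (σ : ℕ → Finset V) {j : ℕ} (h : 0 < j) : par σ j < j := by
  rw [par, dif_pos h]
  have := (Finset.exists_mem_eq_sup (Finset.range j) (Finset.nonempty_range_iff.mpr h.ne')
      (fun i => (σ i ∩ σ j).card)).choose_spec.1
  exact Finset.mem_range.mp this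

lemma par_sup (σ : ℕ → Finset V) {j : ℕ} (h : 0 < j) :
    (Finset.range j).sup (fun i => (σ i ∩ σ j).card) = (σ (par σ j) ∩ σ j).card := by
  rw [par, dif_pos h]
  exact (Finset.exists_mem_eq_sup (Finset.range j) (Finset.nonempty_range_iff.mpr h.ne')
      (fun i => (σ i ∩ σ j).card)).choose_spec.2

end Aux2

/-- for any facet ordering there is a spanning tree `T` of the complete
weighted graph on the `m` facets with `N_≺(X) = χ_w(T) − |V(X)| + 1`. -/
theorem exists_spanning_tree_weighted_euler (X : Finset (Finset V)) (m : ℕ)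
    (hm : 1 ≤ m) (σ : ℕ → Finset V) (hX : IsComplex X) (henum : IsFacetEnum X m σ) :
    ∃ (T : SimpleGraph (Fin m)) (_ : DecidableRel T.Adj), T.IsTree ∧
      ((m : ℤ) - ((Finset.range m).biUnion σ).card + (σ 0).card +
        ∑ j ∈ Finset.Ico 1 m, (((σ j).card : ℤ) - 1 -
          ((Finset.range j).sup (fun i => (σ i ∩ σ j).card) : ℕ))) =
      ((∑ i : Fin m, ((σ i.val).card : ℤ)) -
          ∑ e ∈ T.edgeFinset,
            Sym2.lift ⟨fun i j => (((σ i.val ∩ σ j.val).card : ℤ)),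
              fun i j => by simp [Finset.inter_comm]⟩ e)
        - ((Finset.range m).biUnion σ).card + 1 := by
  classical
  set q : Fin m → Fin m := fun j =>
    if h : 0 < (j : ℕ) then ⟨par σ j.val, (par_lt σ h).trans j.isLt⟩ else j with hqdef
  have hqlt : ∀ j : Fin m, 0 < (j : ℕ) → q j < j := by
    intro j hj
    simp only [hqdef, dif_pos hj]
    exact par_lt σ hj
  have hqval : ∀ j : Fin m, 0 < (j : ℕ) → ((q j : Fin m) : ℕ) = par σ j.val := by
    intro j hj
    simp only [hqdef, dif_pos hj]
  set G : SimpleGraph (Fin m) :=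
    { Adj := fun a b => (a = q b ∧ 0 < (b : ℕ)) ∨ (b = q a ∧ 0 < (a : ℕ))
      symm := ⟨fun a b h => Or.symm h⟩
      loopless := ⟨by
        intro a h
        rcases h with ⟨h1, h2⟩ | ⟨h1, h2⟩ <;>
          · have := hqlt a h2
            rw [← h1] at this
            exact lt_irrefl a this⟩ } with hGdef
  have hGadj : ∀ a b, G.Adj a b ↔ ((a = q b ∧ 0 < (b : ℕ)) ∨ (b = q a ∧ 0 < (a : ℕ))) := by
    intro a b; rfl
  refine ⟨G, Classical.decRel _, ⟨?_, ?_⟩, ?_⟩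
  · -- connected
    have reach : ∀ k : ℕ, ∀ a : Fin m, (a : ℕ) ≤ k → G.Reachable a ⟨0, hm⟩ := by
      intro k
      induction k with
      | zero =>
        intro a h
        have : a = ⟨0, hm⟩ := Fin.ext (Nat.le_zero.mp h)
        rw [this]
      | succ k ih =>
        intro a h
        by_cases h0 : 0 < (a : ℕ)
        · have hadj : G.Adj a (q a) := Or.inr ⟨rfl, h0⟩
          exact hadj.reachable.trans (ih (q a) (by have := hqlt a h0; omega))
        · have hz : (a : ℕ) = 0 := by omega
          have : a = ⟨0, hm⟩ := Fin.ext (by simp [hz])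
          rw [this]
    have : Nonempty (Fin m) := ⟨⟨0, hm⟩⟩
    exact SimpleGraph.Connected.mk
      (fun a b => (reach _ a le_rfl).trans (reach _ b le_rfl).symm)
  · -- acyclic
    apply isAcyclic_of_parent (q := q)
    intro a b hab
    rcases hab with ⟨h1, h2⟩ | ⟨h1, h2⟩
    · exact Or.inl ⟨h1, hqlt b h2⟩
    · exact Or.inr ⟨h1, hqlt a h2⟩
  · -- the weight identity
    set w : Sym2 (Fin m) → ℤ :=
      Sym2.lift ⟨fun i j => (((σ i.val ∩ σ j.val).card : ℤ)),
        fun i j => by simp [Finset.inter_comm]⟩ with hwdef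
    set g : ℕ → ℤ := fun k => (((Finset.range k).sup (fun i => (σ i ∩ σ k).card) : ℕ) : ℤ)
      with hgdef
    have hsum : ∀ (inst : Fintype G.edgeSet),
        ∑ e ∈ @SimpleGraph.edgeFinset _ G inst, w e = ∑ k ∈ Finset.Ico 1 m, g k := by
      intro inst
      have hedges : @SimpleGraph.edgeFinset _ G inst =
          (Finset.univ.filter (fun j : Fin m => 0 < (j : ℕ))).image (fun j => s(q j, j)) := by
        ext e
        refine Sym2.ind (fun a b => ?_) e
        simp only [SimpleGraph.mem_edgeFinset, SimpleGraph.mem_edgeSet, Finset.mem_image,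
          Finset.mem_filter, Finset.mem_univ, true_and]
        constructor
        · rintro (⟨h1, h2⟩ | ⟨h1, h2⟩)
          · exact ⟨b, h2, by rw [h1]⟩
          · exact ⟨a, h2, by rw [h1, Sym2.eq_swap]⟩
        · rintro ⟨j, hj, hejj⟩
          rw [Sym2.eq_iff] at hejj
          rcases hejj with ⟨h1, h2⟩ | ⟨h1, h2⟩
          · subst h2; exact Or.inl ⟨h1.symm, hj⟩
          · subst h2; exact Or.inr ⟨h1.symm, hj⟩
      have hinj : ∀ j ∈ Finset.univ.filter (fun j : Fin m => 0 < (j : ℕ)),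
          ∀ k ∈ Finset.univ.filter (fun j : Fin m => 0 < (j : ℕ)),
          s(q j, j) = s(q k, k) → j = k := by
        intro j hj k hk he
        rw [Sym2.eq_iff] at he
        rcases he with ⟨h1, h2⟩ | ⟨h1, h2⟩
        · exact h2
        · simp only [Finset.mem_filter, Finset.mem_univ, true_and] at hj hk
          have l1 := hqlt j hj
          have l2 := hqlt k hk
          rw [h1] at l1
          rw [← h2] at l2
          exact absurd (l2.trans l1) (lt_irrefl j)
      rw [hedges, Finset.sum_image hinj]
      have step1 : ∀ j ∈ Finset.univ.filter (fun j : Fin m => 0 < (j : ℕ)),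
          w s(q j, j) = g j.val := by
        intro j hj
        simp only [Finset.mem_filter, Finset.mem_univ, true_and] at hj
        have h1 : w s(q j, j) = (((σ (q j).val ∩ σ j.val).card : ℕ) : ℤ) := rfl
        simp only [hgdef]
        rw [h1, hqval j hj, ← par_sup σ hj]
      rw [Finset.sum_congr rfl step1, Finset.sum_filter,
        Fin.sum_univ_eq_sum_range (fun k => if 0 < k then g k else 0) m,
        ← Finset.sum_filter]
      congr 1
      ext k
      simp only [Finset.mem_filter, Finset.mem_range, Finset.mem_Ico]
      omega
    rw [hsum _]
    have hsplit : (∑ i : Fin m, ((σ i.val).card : ℤ)) =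
        ((σ 0).card : ℤ) + ∑ k ∈ Finset.Ico 1 m, ((σ k).card : ℤ) := by
      rw [Fin.sum_univ_eq_sum_range (fun k => ((σ k).card : ℤ)) m, Finset.range_eq_Ico,
        Finset.sum_eq_sum_Ico_succ_bot hm]
    rw [hsplit]
    have hexp : ∑ j ∈ Finset.Ico 1 m, (((σ j).card : ℤ) - 1 -
          (((Finset.range j).sup (fun i => (σ i ∩ σ j).card) : ℕ) : ℤ)) =
        (∑ k ∈ Finset.Ico 1 m, ((σ k).card : ℤ)) - ((m : ℤ) - 1)
          - ∑ k ∈ Finset.Ico 1 m, g k := by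
      rw [Finset.sum_sub_distrib, Finset.sum_sub_distrib, Finset.sum_const, Nat.card_Ico]
      have : ((m - 1 : ℕ) : ℤ) = (m : ℤ) - 1 := by omega
      rw [nsmul_eq_mul, this]
      ring
    rw [hexp]
    ring
end

section
/- Let X be a simplicial complex on V and W ⊆ V such that dim H̃_1(X[W]) ≥ 1. Among all 1-cycles α of X[W] whose class generates a nonzero element of H̃_1(X[W]), choose one with the minimum number s of edges. Then the s edges of α form a cycle graph, and this cycle is an induced cycle of the 1-skeleton of X[W] (it has no chord in X[W]). -/
open Finset

variable {V : Type*} [DecidableEq V] [Fintype V]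

section Aux
set_option linter.unusedSectionVars false
variable {V : Type*} [DecidableEq V] [Fintype V]

lemma pair_eq_pair' {a b c d : V} (h : ({a,b} : Finset V) = {c,d}) :
    (a = c ∧ b = d) ∨ (a = d ∧ b = c) := by
  have ha : a ∈ ({c,d} : Finset V) := h ▸ (by simp)
  have hb : b ∈ ({c,d} : Finset V) := h ▸ (by simp)
  have hc : c ∈ ({a,b} : Finset V) := h.symm ▸ (by simp)
  have hd : d ∈ ({a,b} : Finset V) := h.symm ▸ (by simp)
  simp only [mem_insert, mem_singleton] at ha hb hc hd
  rcases ha with rfl|rfl <;> rcases hb with h1|h1 <;> try tauto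

lemma bdry_empty : bdry (∅ : Finset (Finset V)) = ∅ := by
  simp [bdry]

lemma bdry_eq_empty_iff {c : Finset (Finset V)} (hc : ∀ s ∈ c, s.card = 2) :
    bdry c = ∅ ↔ ∀ v : V, Even ((c.filter (fun s => v ∈ s)).card) := by
  unfold bdry
  rw [Finset.filter_eq_empty_iff]
  constructor
  · intro h v
    have h1 := h (Finset.mem_univ ({v} : Finset V))
    rw [Nat.not_odd_iff_even] at h1
    have : c.filter (fun s => ({v} : Finset V) ⊆ s ∧ s.card = ({v} : Finset V).card + 1)
        = c.filter (fun s => v ∈ s) := by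
      apply Finset.filter_congr
      intro s hs
      simp [Finset.singleton_subset_iff, hc s hs]
    rwa [this] at h1
  · intro h τ _
    rw [Nat.not_odd_iff_even]
    by_cases h1 : τ.card = 1
    · obtain ⟨v, rfl⟩ := Finset.card_eq_one.mp h1
      have : c.filter (fun s => ({v} : Finset V) ⊆ s ∧ s.card = ({v} : Finset V).card + 1)
          = c.filter (fun s => v ∈ s) := by
        apply Finset.filter_congr
        intro s hs
        simp [Finset.singleton_subset_iff, hc s hs]
      rw [this]; exact h v
    · have : c.filter (fun s => τ ⊆ s ∧ s.card = τ.card + 1) = ∅ := by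
        rw [Finset.filter_eq_empty_iff]
        intro s hs
        rw [hc s hs]
        intro ⟨_, h2⟩
        omega
      simp [this]

lemma chAdd_filter (c d : Finset (Finset V)) (p : Finset V → Prop) [DecidablePred p] :
    (chAdd c d).filter p = chAdd (c.filter p) (d.filter p) := by
  ext x; simp only [chAdd, Finset.mem_filter, Finset.mem_union, Finset.mem_sdiff]; tauto

lemma card_chAdd_odd (a b : Finset (Finset V)) :
    Odd (chAdd a b).card ↔ ((Odd a.card ∧ ¬ Odd b.card) ∨ (Odd b.card ∧ ¬ Odd a.card)) := by
  have h1 : (a \ b).card + (a ∩ b).card = a.card := Finset.card_sdiff_add_card_inter a b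
  have h2 : (b \ a).card + (b ∩ a).card = b.card := Finset.card_sdiff_add_card_inter b a
  have h3 : (chAdd a b).card = (a \ b).card + (b \ a).card := by
    apply Finset.card_union_of_disjoint
    rw [Finset.disjoint_left]
    intro x hx hx'
    simp only [Finset.mem_sdiff] at hx hx'
    exact hx.2 hx'.1
  have h4 : (a ∩ b).card = (b ∩ a).card := by rw [Finset.inter_comm]
  rw [h3]
  simp only [Nat.odd_iff] at *
  omega

lemma bdry_chAdd (c d : Finset (Finset V)) : bdry (chAdd c d) = chAdd (bdry c) (bdry d) := by
  ext τ
  have hf := chAdd_filter c d (fun s => τ ⊆ s ∧ s.card = τ.card + 1)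
  simp only [bdry]
  rw [show (Finset.univ.filter (fun τ' => Odd ((chAdd c d).filter
      (fun s => τ' ⊆ s ∧ s.card = τ'.card + 1)).card)) =
      Finset.univ.filter (fun τ' => Odd ((chAdd (c.filter (fun s => τ' ⊆ s ∧ s.card = τ'.card + 1))
        (d.filter (fun s => τ' ⊆ s ∧ s.card = τ'.card + 1))).card)) from
    Finset.filter_congr (fun τ' _ => by rw [chAdd_filter])]
  simp only [chAdd, Finset.mem_union, Finset.mem_sdiff, Finset.mem_filter, Finset.mem_univ,
    true_and]
  change τ ∈ Finset.univ.filter (fun τ' => Odd ((chAdd (c.filter (fun s => τ' ⊆ s ∧ s.card = τ'.card + 1))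
    (d.filter (fun s => τ' ⊆ s ∧ s.card = τ'.card + 1))).card)) ↔ _
  rw [Finset.mem_filter]
  simp only [Finset.mem_univ, true_and]
  rw [card_chAdd_odd]

lemma chAdd_sdiff {c α : Finset (Finset V)} (h : c ⊆ α) : chAdd c (α \ c) = α := by
  ext x
  simp only [chAdd, Finset.mem_union, Finset.mem_sdiff]
  constructor
  · rintro (⟨h1, _⟩ | ⟨⟨h1, _⟩, _⟩) <;> first | exact h h1 | exact h1
  · intro hx
    by_cases hc : x ∈ c
    · left; exact ⟨hc, fun h' => h'.2 hc⟩
    · right; exact ⟨⟨hx, hc⟩, hc⟩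

lemma chAdd_subset_union (c d : Finset (Finset V)) : chAdd c d ⊆ c ∪ d := by
  intro x hx
  simp only [chAdd, Finset.mem_union, Finset.mem_sdiff] at hx ⊢
  tauto

end Aux
section Cyc
set_option linter.unusedSectionVars false
variable {V : Type*} [DecidableEq V] [Fintype V]

def cycEdges (f : ℕ → V) (n : ℕ) : Finset (Finset V) :=
  (Finset.range n).image (fun i => ({f i, f ((i + 1) % n)} : Finset V))

lemma succ_mod {n i : ℕ} (hi : i < n) : (i + 1) % n = if i + 1 = n then 0 else i + 1 := by
  split
  · next h => rw [h, Nat.mod_self]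
  · next h => exact Nat.mod_eq_of_lt (by omega)

variable {f : ℕ → V} {n : ℕ} (h3 : 3 ≤ n)
  (hf : ∀ i j, i < n → j < n → f i = f j → i = j)

include h3 hf in
lemma cyc_edge_inj : ∀ i ∈ Finset.range n, ∀ j ∈ Finset.range n,
    ({f i, f ((i + 1) % n)} : Finset V) = {f j, f ((j + 1) % n)} → i = j := by
  intro i hi j hj h
  simp only [Finset.mem_range] at hi hj
  rcases pair_eq_pair' h with ⟨h1, _⟩ | ⟨h1, h2⟩
  · exact hf i j hi hj h1
  · have e1 : i = (j + 1) % n := hf _ _ hi (Nat.mod_lt _ (by omega)) h1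
    have e2 : (i + 1) % n = j := hf _ _ (Nat.mod_lt _ (by omega)) hj h2
    rw [succ_mod hi] at e2
    rw [succ_mod hj] at e1
    split at e1 <;> split at e2 <;> omega

include h3 hf in
lemma cyc_card : (cycEdges f n).card = n := by
  rw [cycEdges, Finset.card_image_of_injOn (cyc_edge_inj h3 hf), Finset.card_range]

include h3 hf in
lemma cyc_card_two : ∀ s ∈ cycEdges f n, s.card = 2 := by
  intro s hs
  rw [cycEdges, Finset.mem_image] at hs
  obtain ⟨i, hi, rfl⟩ := hs
  simp only [Finset.mem_range] at hi
  rw [Finset.card_pair]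
  intro h
  have := hf _ _ hi (Nat.mod_lt _ (by omega)) h
  rw [succ_mod hi] at this
  split at this <;> omega

include h3 hf in
lemma cyc_deg (v : V) : Even (((cycEdges f n).filter (fun s => v ∈ s)).card) := by
  have himg : ((cycEdges f n).filter (fun s => v ∈ s)) =
      ((Finset.range n).filter (fun i => v ∈ ({f i, f ((i + 1) % n)} : Finset V))).image
        (fun i => ({f i, f ((i + 1) % n)} : Finset V)) := by
    rw [cycEdges, Finset.filter_image]
  rw [himg, Finset.card_image_of_injOn (fun i hi j hj h =>
    cyc_edge_inj h3 hf i (Finset.mem_filter.mp hi).1 j (Finset.mem_filter.mp hj).1 h)]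
  by_cases hv : ∃ a, a < n ∧ f a = v
  · obtain ⟨a, ha, rfl⟩ := hv
    have hT : (Finset.range n).filter (fun i => f a ∈ ({f i, f ((i + 1) % n)} : Finset V)) =
        {a, if a = 0 then n - 1 else a - 1} := by
      ext i
      simp only [Finset.mem_filter, Finset.mem_range, Finset.mem_insert, Finset.mem_singleton,
        Finset.mem_insert, Finset.mem_singleton]
      constructor
      · rintro ⟨hi, h | h⟩
        · left; exact (hf _ _ ha hi h).symm
        · right
          have := hf _ _ ha (Nat.mod_lt _ (by omega)) h
          rw [succ_mod hi] at this
          split at this <;> split <;> omega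
      · rintro (rfl | rfl)
        · exact ⟨ha, Or.inl rfl⟩
        · split
          · next h0 =>
            refine ⟨by omega, Or.inr ?_⟩
            congr 1
            rw [succ_mod (show n - 1 < n by omega)]
            split <;> omega
          · next h0 =>
            refine ⟨by omega, Or.inr ?_⟩
            congr 1
            rw [succ_mod (show a - 1 < n by omega)]
            split <;> omega
    rw [hT, Finset.card_insert_of_notMem (by simp; split <;> omega), Finset.card_singleton]
    decide
  · have hT : (Finset.range n).filter (fun i => v ∈ ({f i, f ((i + 1) % n)} : Finset V)) = ∅ := by
      rw [Finset.filter_eq_empty_iff]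
      intro i hi
      simp only [Finset.mem_range] at hi
      simp only [Finset.mem_insert, Finset.mem_singleton]
      push_neg
      constructor
      · intro h; exact hv ⟨i, hi, h.symm⟩
      · intro h; exact hv ⟨(i + 1) % n, Nat.mod_lt _ (by omega), h.symm⟩
    rw [hT]; simp

include h3 hf in
lemma cyc_bdry : bdry (cycEdges f n) = ∅ :=
  (bdry_eq_empty_iff (cyc_card_two h3 hf)).mpr (cyc_deg h3 hf)

end Cyc
section ExCyc
set_option linter.unusedSectionVars false
variable {V : Type*} [DecidableEq V] [Fintype V]

lemma exists_cycle (α : Finset (Finset V)) (hne : α.Nonempty)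
    (h2 : ∀ s ∈ α, s.card = 2)
    (hdeg : ∀ v : V, Even ((α.filter (fun s => v ∈ s)).card)) :
    ∃ n : ℕ, ∃ f : ℕ → V, 3 ≤ n ∧ (∀ i j, i < n → j < n → f i = f j → i = j) ∧
      cycEdges f n ⊆ α := by
  classical
  set P : Set ℕ := {k | ∃ g : ℕ → V, (∀ i j, i ≤ k → j ≤ k → g i = g j → i = j) ∧
    ∀ i, i < k → ({g i, g (i + 1)} : Finset V) ∈ α} with hP
  have h1P : 1 ∈ P := by
    obtain ⟨s, hs⟩ := hne
    obtain ⟨u, v, huv, rfl⟩ := Finset.card_eq_two.mp (h2 s hs)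
    refine ⟨fun i => if i = 0 then u else v, ?_, ?_⟩
    · intro i j hi hj h
      interval_cases i <;> interval_cases j <;> simp_all
    · intro i hi
      interval_cases i
      simpa using hs
  have hbdd : BddAbove P := by
    refine ⟨Fintype.card V, fun k hk => ?_⟩
    obtain ⟨g, hg, _⟩ := hk
    have : (Finset.range (k + 1)).card ≤ (Finset.univ : Finset V).card := by
      apply Finset.card_le_card_of_injOn g (fun _ _ => Finset.mem_univ _)
      intro i hi j hj h
      simp only [Finset.mem_coe, Finset.mem_range] at hi hj
      exact hg i j (by omega) (by omega) h
    simp only [Finset.card_range, Finset.card_univ] at this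
    omega
  set k := sSup P with hk
  have hkP : k ∈ P := Nat.sSup_mem ⟨1, h1P⟩ hbdd
  have hk1 : 1 ≤ k := le_csSup hbdd h1P
  obtain ⟨g, hg, hge⟩ := hkP
  -- the last vertex has another neighbor
  have hE : ({g (k - 1), g k} : Finset V) ∈ α := by
    have := hge (k - 1) (by omega)
    rwa [show k - 1 + 1 = k by omega] at this
  have hcard2 : 2 ≤ ((α.filter (fun s => g k ∈ s)).card) := by
    have hmem : ({g (k - 1), g k} : Finset V) ∈ α.filter (fun s => g k ∈ s) := by
      simp [hE]
    have := hdeg (g k)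
    have hpos : 0 < (α.filter (fun s => g k ∈ s)).card := Finset.card_pos.mpr ⟨_, hmem⟩
    rcases this with ⟨m, hm⟩
    omega
  obtain ⟨e, he, hene⟩ : ∃ e ∈ α, g k ∈ e ∧ e ≠ ({g (k - 1), g k} : Finset V) := by
    obtain ⟨e1, he1, e2, he2, hne12⟩ := Finset.one_lt_card.mp hcard2
    simp only [Finset.mem_filter] at he1 he2
    by_cases h : e1 = ({g (k - 1), g k} : Finset V)
    · exact ⟨e2, he2.1, he2.2, by rw [← h]; exact (Ne.symm hne12)⟩
    · exact ⟨e1, he1.1, he1.2, h⟩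
  obtain ⟨hgk, hne⟩ := hene
  obtain ⟨x, y, hxy, rfl⟩ := Finset.card_eq_two.mp (h2 e he)
  -- w : the other endpoint of e
  obtain ⟨w, hw, hwne⟩ : ∃ w, ({g k, w} : Finset V) = {x, y} ∧ w ≠ g k := by
    rcases Finset.mem_insert.mp hgk with h | h
    · exact ⟨y, by rw [h], by rw [h]; exact (Ne.symm hxy)⟩
    · rw [Finset.mem_singleton] at h
      exact ⟨x, by rw [h, Finset.pair_comm], by rw [h]; exact hxy⟩
  rw [← hw] at he hne
  by_cases hwin : ∃ i, i ≤ k ∧ g i = w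
  · -- w = g i with i ≤ k - 2 : we get a cycle
    obtain ⟨i, hik, hgi⟩ := hwin
    have hik' : i ≠ k := fun h => hwne (by rw [← hgi, h])
    have hik2 : i ≠ k - 1 := by
      intro h
      apply hne
      rw [← hgi, h, Finset.pair_comm]
    have hik3 : i + 2 ≤ k := by omega
    refine ⟨k - i + 1, fun j => g (i + j), by omega, ?_, ?_⟩
    · intro a b ha hb h
      have := hg (i + a) (i + b) (by omega) (by omega) h
      omega
    · intro s hs
      rw [cycEdges, Finset.mem_image] at hs
      obtain ⟨j, hj, rfl⟩ := hs
      simp only [Finset.mem_range] at hj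
      rw [succ_mod hj]
      split
      · next h =>
        have h1 : i + j = k := by omega
        rw [h1]
        simpa [hgi, Finset.pair_comm] using he
      · next h =>
        have := hge (i + j) (by omega)
        rwa [show i + (j + 1) = i + j + 1 by omega]
  · -- extend the path: contradiction with maximality
    exfalso
    push_neg at hwin
    have : k + 1 ∈ P := by
      refine ⟨fun i => if i = k + 1 then w else g i, ?_, ?_⟩
      · intro i j hi hj h
        by_cases h1 : i = k + 1 <;> by_cases h2 : j = k + 1 <;> simp [h1, h2] at h
        · omega
        · exact absurd h.symm (hwin j (by omega))
        · exact absurd h (hwin i (by omega))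
        · exact hg i j (by omega) (by omega) h
      · intro i hi
        by_cases h1 : i = k
        · subst h1
          simp only [if_neg (by omega : ¬ k = k + 1), if_pos rfl]
          exact he
        · simp only [if_neg (by omega : ¬ i = k + 1), if_neg (by omega : ¬ i + 1 = k + 1)]
          exact hge i (by omega)
    have := le_csSup hbdd this
    omega

end ExCyc
section Main
set_option linter.unusedSectionVars false
variable {V : Type*} [DecidableEq V] [Fintype V]

lemma empty_is_bdry (Y : Finset (Finset V)) : IsNBdry Y 1 (∅ : Finset (Finset V)) :=
  ⟨∅, ⟨Finset.empty_subset _, fun s hs => absurd hs (Finset.notMem_empty s)⟩, bdry_empty⟩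

lemma sdiff_bdry_empty {α c : Finset (Finset V)} (h2 : ∀ s ∈ α, s.card = 2)
    (hα : bdry α = ∅) (hc : bdry c = ∅) (hsub : c ⊆ α) : bdry (α \ c) = ∅ := by
  rw [bdry_eq_empty_iff (fun s hs => h2 s (Finset.mem_sdiff.mp hs).1)]
  intro v
  have hda := (bdry_eq_empty_iff h2).mp hα v
  have hdc := (bdry_eq_empty_iff (fun s hs => h2 s (hsub hs))).mp hc v
  have hfs : (α \ c).filter (fun s => v ∈ s) = α.filter (fun s => v ∈ s) \ c.filter (fun s => v ∈ s) := by
    ext x; simp only [Finset.mem_filter, Finset.mem_sdiff]; tauto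
  rw [hfs, Finset.card_sdiff_of_subset (Finset.filter_subset_filter _ hsub)]
  rcases hda with ⟨m, hm⟩
  rcases hdc with ⟨l, hl⟩
  have : (c.filter (fun s => v ∈ s)).card ≤ (α.filter (fun s => v ∈ s)).card :=
    Finset.card_le_card (Finset.filter_subset_filter _ hsub)
  exact ⟨m - l, by omega⟩

lemma bdry_sum_bdry {Y c1 c2 α : Finset (Finset V)} (h1 : IsNBdry Y 1 c1)
    (h2 : IsNBdry Y 1 c2) (h : chAdd c1 c2 = α) : IsNBdry Y 1 α := by
  obtain ⟨d1, ⟨hd1s, hd1c⟩, hb1⟩ := h1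
  obtain ⟨d2, ⟨hd2s, hd2c⟩, hb2⟩ := h2
  refine ⟨chAdd d1 d2, ⟨?_, ?_⟩, ?_⟩
  · exact (chAdd_subset_union d1 d2).trans (Finset.union_subset hd1s hd2s)
  · intro s hs
    rcases Finset.mem_union.mp (chAdd_subset_union d1 d2 hs) with h | h
    · exact hd1c s h
    · exact hd2c s h
  · rw [bdry_chAdd, hb1, hb2, h]

end Main
section Chord
set_option linter.unusedSectionVars false
variable {V : Type*} [DecidableEq V] [Fintype V]

lemma chAdd_insert {e : Finset V} {A B : Finset (Finset V)} (heA : e ∉ A) (heB : e ∉ B)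
    (hAB : ∀ x, x ∈ A → x ∉ B) : chAdd (insert e A) (insert e B) = A ∪ B := by
  ext x
  simp only [chAdd, Finset.mem_union, Finset.mem_sdiff, Finset.mem_insert]
  by_cases hx : x = e
  · subst hx
    simp [heA, heB]
  · have := hAB x
    tauto

variable {f : ℕ → V} {n a b : ℕ} (h3 : 3 ≤ n)
  (hf : ∀ i j, i < n → j < n → f i = f j → i = j)
  (hab : a < b) (hbn : b < n)

include hab hbn in
lemma arc1_eq : cycEdges (fun j => f (a + j)) (b - a + 1) =
    insert ({f a, f b} : Finset V)
      ((Finset.Ico a b).image (fun i => ({f i, f ((i + 1) % n)} : Finset V))) := by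
  set n₁ := b - a + 1 with hn₁
  have hr : Finset.range n₁ = insert (n₁ - 1) (Finset.range (n₁ - 1)) := by
    rw [← Finset.range_add_one]
    congr 1
  rw [cycEdges, hr, Finset.image_insert]
  congr 1
  · have hm : (n₁ - 1 + 1) % n₁ = 0 := by
      rw [show n₁ - 1 + 1 = n₁ by omega, Nat.mod_self]
    rw [hm, show a + (n₁ - 1) = b by omega, show a + 0 = a by omega, Finset.pair_comm]
  · have hmap : ∀ j ∈ Finset.range (n₁ - 1),
        ({f (a + j), f (a + (j + 1) % n₁)} : Finset V)
          = {f (a + j), f ((a + j + 1) % n)} := by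
      intro j hj
      simp only [Finset.mem_range] at hj
      rw [Nat.mod_eq_of_lt (show j + 1 < n₁ by omega),
        Nat.mod_eq_of_lt (show a + j + 1 < n by omega), show a + (j + 1) = a + j + 1 by omega]
    rw [Finset.image_congr hmap]
    have hidx : (Finset.range (n₁ - 1)).image (fun j => a + j) = Finset.Ico a b := by
      ext i
      simp only [Finset.mem_image, Finset.mem_range, Finset.mem_Ico]
      constructor
      · rintro ⟨j, hj, rfl⟩; omega
      · intro hi; exact ⟨i - a, by omega, by omega⟩
    rw [← hidx, Finset.image_image]
    rfl

include hab hbn in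
lemma arc2_eq : cycEdges (fun j => f ((b + j) % n)) (n - b + a + 1) =
    insert ({f a, f b} : Finset V)
      (((Finset.range n).filter (fun i => i < a ∨ b ≤ i)).image
        (fun i => ({f i, f ((i + 1) % n)} : Finset V))) := by
  set n₂ := n - b + a + 1 with hn₂
  have hr : Finset.range n₂ = insert (n₂ - 1) (Finset.range (n₂ - 1)) := by
    rw [← Finset.range_add_one]
    congr 1
  rw [cycEdges, hr, Finset.image_insert]
  congr 1
  · have hm : (n₂ - 1 + 1) % n₂ = 0 := by
      rw [show n₂ - 1 + 1 = n₂ by omega, Nat.mod_self]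
    rw [hm]
    have h1 : (b + (n₂ - 1)) % n = a := by
      rw [show b + (n₂ - 1) = n + a by omega, Nat.add_mod_left, Nat.mod_eq_of_lt (by omega)]
    have h2 : (b + 0) % n = b := by
      rw [Nat.add_zero, Nat.mod_eq_of_lt hbn]
    rw [h1, h2]
  · have hmap : ∀ j ∈ Finset.range (n₂ - 1),
        ({f ((b + j) % n), f ((b + (j + 1) % n₂) % n)} : Finset V)
          = {f ((b + j) % n), f (((b + j) % n + 1) % n)} := by
      intro j hj
      simp only [Finset.mem_range] at hj
      rw [Nat.mod_eq_of_lt (show j + 1 < n₂ by omega), Nat.mod_add_mod,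
        show b + (j + 1) = b + j + 1 by omega]
    rw [Finset.image_congr hmap]
    have hidx : (Finset.range (n₂ - 1)).image (fun j => (b + j) % n) =
        (Finset.range n).filter (fun i => i < a ∨ b ≤ i) := by
      ext i
      simp only [Finset.mem_image, Finset.mem_range, Finset.mem_filter]
      constructor
      · rintro ⟨j, hj, rfl⟩
        by_cases h : b + j < n
        · rw [Nat.mod_eq_of_lt h]
          omega
        · rw [Nat.mod_eq_sub_mod (by omega), Nat.mod_eq_of_lt (by omega)]
          omega
      · rintro ⟨hi, hcase⟩
        rcases hcase with h | h
        · exact ⟨n - b + i, by omega, by rw [show b + (n - b + i) = n + i by omega,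
            Nat.add_mod_left, Nat.mod_eq_of_lt (by omega)]⟩
        · exact ⟨i - b, by omega, by rw [show b + (i - b) = i by omega,
            Nat.mod_eq_of_lt (by omega)]⟩
    rw [← hidx, Finset.image_image]
    rfl

include hf hab hbn in
lemma arc1_inj : ∀ i j, i < b - a + 1 → j < b - a + 1 → f (a + i) = f (a + j) → i = j := by
  intro i j hi hj h
  have := hf (a + i) (a + j) (by omega) (by omega) h
  omega

include hf hab hbn in
lemma arc2_inj : ∀ i j, i < n - b + a + 1 → j < n - b + a + 1 →
    f ((b + i) % n) = f ((b + j) % n) → i = j := by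
  intro i j hi hj h
  have h0 : 0 < n := by omega
  have heq : (b + i) % n = (b + j) % n :=
    hf _ _ (Nat.mod_lt _ h0) (Nat.mod_lt _ h0) h
  have hij : i % n = j % n := Nat.ModEq.add_left_cancel' b heq
  rw [Nat.mod_eq_of_lt (by omega), Nat.mod_eq_of_lt (by omega)] at hij
  exact hij

end Chord
section ChordMain
set_option linter.unusedSectionVars false
variable {V : Type*} [DecidableEq V] [Fintype V]

lemma chord_false (X : Finset (Finset V)) (W : Finset V) (f : ℕ → V) (n a b : ℕ)
    (h3 : 3 ≤ n) (hf : ∀ i j, i < n → j < n → f i = f j → i = j)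
    (hα : cycEdges f n ⊆ indOn X W)
    (hnb : ¬ IsNBdry (indOn X W) 1 (cycEdges f n))
    (hmin : ∀ α', IsNCycle (indOn X W) 1 α' → ¬ IsNBdry (indOn X W) 1 α' →
      (cycEdges f n).card ≤ α'.card)
    (he : ({f a, f b} : Finset V) ∈ indOn X W) (hab : a < b) (hbn : b < n)
    (hne : ({f a, f b} : Finset V) ∉ cycEdges f n) : False := by
  -- b ≥ a + 2 and b - a ≤ n - 2
  have hb2 : a + 2 ≤ b := by
    rcases Nat.lt_or_ge (a + 1) b with h | h
    · omega
    · exfalso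
      apply hne
      have hba : b = a + 1 := by omega
      rw [cycEdges, Finset.mem_image]
      refine ⟨a, Finset.mem_range.mpr (by omega), ?_⟩
      rw [Nat.mod_eq_of_lt (show a + 1 < n by omega), hba]
  have hban : b - a ≤ n - 2 := by
    by_contra h
    have ha0 : a = 0 ∧ b = n - 1 := by omega
    apply hne
    rw [cycEdges, Finset.mem_image]
    refine ⟨n - 1, Finset.mem_range.mpr (by omega), ?_⟩
    rw [show n - 1 + 1 = n by omega, Nat.mod_self, ha0.1, ha0.2]
    exact Finset.pair_comm _ _
  set e : Finset V := ({f a, f b} : Finset V) with hedef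
  set edgeα : ℕ → Finset V := fun i => ({f i, f ((i + 1) % n)} : Finset V) with hedge
  set A : Finset (Finset V) := (Finset.Ico a b).image edgeα with hA
  set B : Finset (Finset V) := ((Finset.range n).filter (fun i => i < a ∨ b ≤ i)).image edgeα
    with hB
  set n₁ := b - a + 1 with hn₁
  set n₂ := n - b + a + 1 with hn₂
  set f₁ : ℕ → V := fun j => f (a + j) with hf₁
  set f₂ : ℕ → V := fun j => f ((b + j) % n) with hf₂
  have hf₁i := arc1_inj hf hab hbn
  have hf₂i := arc2_inj hf hab hbn
  have h3₁ : 3 ≤ n₁ := by omega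
  have h3₂ : 3 ≤ n₂ := by omega
  have hC1 : cycEdges f₁ n₁ = insert e A := arc1_eq hab hbn
  have hC2 : cycEdges f₂ n₂ = insert e B := arc2_eq hab hbn
  have hAsub : A ⊆ cycEdges f n := by
    intro x hx
    rw [hA, Finset.mem_image] at hx
    obtain ⟨i, hi, rfl⟩ := hx
    rw [Finset.mem_Ico] at hi
    rw [cycEdges, Finset.mem_image]
    exact ⟨i, Finset.mem_range.mpr (by omega), rfl⟩
  have hBsub : B ⊆ cycEdges f n := by
    intro x hx
    rw [hB, Finset.mem_image] at hx
    obtain ⟨i, hi, rfl⟩ := hx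
    rw [Finset.mem_filter, Finset.mem_range] at hi
    rw [cycEdges, Finset.mem_image]
    exact ⟨i, Finset.mem_range.mpr hi.1, rfl⟩
  have heA : e ∉ A := fun h => hne (hAsub h)
  have heB : e ∉ B := fun h => hne (hBsub h)
  have hAB : ∀ x, x ∈ A → x ∉ B := by
    intro x hxA hxB
    rw [hA, Finset.mem_image] at hxA
    rw [hB, Finset.mem_image] at hxB
    obtain ⟨i, hi, rfl⟩ := hxA
    obtain ⟨i', hi', heq⟩ := hxB
    rw [Finset.mem_Ico] at hi
    rw [Finset.mem_filter, Finset.mem_range] at hi'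
    have := cyc_edge_inj h3 hf i' (Finset.mem_range.mpr hi'.1)
      i (Finset.mem_range.mpr (by omega)) heq
    omega
  have hsum : chAdd (cycEdges f₁ n₁) (cycEdges f₂ n₂) = cycEdges f n := by
    rw [hC1, hC2, chAdd_insert heA heB hAB, hA, hB, ← Finset.image_union]
    rw [cycEdges]
    congr 1
    ext i
    simp only [Finset.mem_union, Finset.mem_Ico, Finset.mem_filter, Finset.mem_range]
    omega
  -- both arcs are 1-cycles of indOn X W
  have hchain : ∀ (g : ℕ → V) (m : ℕ), 3 ≤ m →
      (∀ i j, i < m → j < m → g i = g j → i = j) →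
      cycEdges g m = insert e (A ∪ B) ∩ cycEdges g m →  -- dummy, unused
      True := fun _ _ _ _ _ => trivial
  have harc : ∀ (g : ℕ → V) (m : ℕ) (h3' : 3 ≤ m)
      (hg : ∀ i j, i < m → j < m → g i = g j → i = j)
      (hins : ∃ C, C ⊆ cycEdges f n ∧ cycEdges g m = insert e C),
      IsNCycle (indOn X W) 1 (cycEdges g m) := by
    rintro g m h3' hg ⟨C, hCsub, hCeq⟩
    refine ⟨⟨?_, cyc_card_two h3' hg⟩, cyc_bdry h3' hg⟩
    rw [hCeq]
    intro x hx
    rcases Finset.mem_insert.mp hx with rfl | hx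
    · exact he
    · exact hα (hCsub hx)
  have hcyc1 : IsNCycle (indOn X W) 1 (cycEdges f₁ n₁) :=
    harc f₁ n₁ h3₁ hf₁i ⟨A, hAsub, hC1⟩
  have hcyc2 : IsNCycle (indOn X W) 1 (cycEdges f₂ n₂) :=
    harc f₂ n₂ h3₂ hf₂i ⟨B, hBsub, hC2⟩
  have hcard : (cycEdges f n).card = n := cyc_card h3 hf
  have hcard1 : (cycEdges f₁ n₁).card = n₁ := cyc_card h3₁ hf₁i
  have hcard2 : (cycEdges f₂ n₂).card = n₂ := cyc_card h3₂ hf₂i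
  have hb1 : IsNBdry (indOn X W) 1 (cycEdges f₁ n₁) := by
    by_contra h
    have := hmin _ hcyc1 h
    rw [hcard, hcard1] at this
    omega
  have hb2' : IsNBdry (indOn X W) 1 (cycEdges f₂ n₂) := by
    by_contra h
    have := hmin _ hcyc2 h
    rw [hcard, hcard2] at this
    omega
  exact hnb (bdry_sum_bdry hb1 hb2' hsum)

end ChordMain

/-- a nonbounding `1`-cycle of `X[W]` with the minimum number of edges
among all nonbounding `1`-cycles is an induced (chordless) cycle of the `1`-skeleton. -/
theorem minimal_generator_is_induced_cycle (X : Finset (Finset V)) (hX : IsComplex X)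
    (W : Finset V) (α : Finset (Finset V))
    (hcyc : IsNCycle (indOn X W) 1 α) (hnb : ¬ IsNBdry (indOn X W) 1 α)
    (hmin : ∀ α', IsNCycle (indOn X W) 1 α' → ¬ IsNBdry (indOn X W) 1 α' →
      α.card ≤ α'.card) :
    IsCycleEdges α ∧ ∀ e ∈ indOn X W, e.card = 2 → e ⊆ α.biUnion id → e ∈ α := by
  classical
  obtain ⟨⟨hsub, h2⟩, hbd⟩ := hcyc
  have hne : α.Nonempty := by
    rcases α.eq_empty_or_nonempty with rfl | h
    · exact absurd (empty_is_bdry _) hnb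
    · exact h
  have h2' : ∀ s ∈ α, s.card = 2 := fun s hs => h2 s hs
  have hdeg := (bdry_eq_empty_iff h2').mp hbd
  obtain ⟨n, f, h3, hf, hsubc⟩ := exists_cycle α hne h2' hdeg
  have hcyc_c : IsNCycle (indOn X W) 1 (cycEdges f n) :=
    ⟨⟨hsubc.trans hsub, fun s hs => h2 s (hsubc hs)⟩, cyc_bdry h3 hf⟩
  have hcnb : ¬ IsNBdry (indOn X W) 1 (cycEdges f n) := by
    intro hcb
    have hdcyc : IsNCycle (indOn X W) 1 (α \ cycEdges f n) :=
      ⟨⟨(Finset.sdiff_subset).trans hsub, fun s hs => h2 s (Finset.mem_sdiff.mp hs).1⟩,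
        sdiff_bdry_empty h2' hbd (cyc_bdry h3 hf) hsubc⟩
    have hdnb : ¬ IsNBdry (indOn X W) 1 (α \ cycEdges f n) := by
      intro hdb
      exact hnb (bdry_sum_bdry hcb hdb (chAdd_sdiff hsubc))
    have hm := hmin _ hdcyc hdnb
    have hpos : 0 < (cycEdges f n).card := by
      rw [cyc_card h3 hf]; omega
    have hle := Finset.card_le_card hsubc
    rw [Finset.card_sdiff_of_subset hsubc] at hm
    omega
  have hαeq : α = cycEdges f n := by
    have := hmin _ hcyc_c hcnb
    exact (Finset.eq_of_subset_of_card_le hsubc this).symm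
  subst hαeq
  refine ⟨⟨n, h3, f, hf, rfl⟩, ?_⟩
  intro e he hecard hesub
  by_contra hce
  obtain ⟨u, v, huv, rfl⟩ := Finset.card_eq_two.mp hecard
  have hvert : ∀ w, w ∈ (cycEdges f n).biUnion id → ∃ i, i < n ∧ f i = w := by
    intro w hw
    rw [Finset.mem_biUnion] at hw
    obtain ⟨t, ht, hwt⟩ := hw
    rw [cycEdges, Finset.mem_image] at ht
    obtain ⟨i, hi, rfl⟩ := ht
    simp only [Finset.mem_range] at hi
    simp only [id, Finset.mem_insert, Finset.mem_singleton] at hwt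
    rcases hwt with rfl | rfl
    · exact ⟨i, hi, rfl⟩
    · exact ⟨(i + 1) % n, Nat.mod_lt _ (by omega), rfl⟩
  obtain ⟨a, han, hfa⟩ := hvert u (hesub (by simp))
  obtain ⟨b, hbn', hfb⟩ := hvert v (hesub (by simp))
  have hne2 : a ≠ b := fun h => huv (by rw [← hfa, ← hfb, h])
  rw [← hfa, ← hfb] at hce he
  rcases Nat.lt_or_ge a b with h | h
  · exact chord_false X W f n a b h3 hf hsub hnb hmin he h hbn' hce
  · have hba : b < a := by omega
    rw [Finset.pair_comm] at hce he
    exact chord_false X W f n b a h3 hf hsub hnb hmin he hba han hce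
end
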